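/- Let V ⊆ (Γ → 𝔽₂)^r be a linear subshift and V⁰ its subspace of finitely supported elements. If V⁰ ≠ 0 then h_Γ(V⁰) > 0. -/
import Mathlib


open Filter Topology Pointwise

instance : TopologicalSpace (ZMod 2) := ⊥
instance : DiscreteTopology (ZMod 2) := ⟨rfl⟩

variable {G : Type*} [Group G] [DecidableEq G]

/-- Left translation action on functions. -/
def ltv (M : Type*) (γ : G) (f : G → M) : G → M := fun δ => f (γ⁻¹ * δ)

/-- A `Γ`-invariant linear subspace. -/
def InvariantSub (M : Type*) [AddCommGroup M] [Module (ZMod 2) M]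
    (W : Submodule (ZMod 2) (G → M)) : Prop :=
  ∀ γ : G, ∀ f ∈ W, ltv M γ f ∈ W

/-- The space of restrictions of elements of `W` to `Λ`. -/
noncomputable def resSpace {M : Type*} [AddCommGroup M] [Module (ZMod 2) M]
    (W : Submodule (ZMod 2) (G → M)) (Λ : Finset G) :
    Submodule (ZMod 2) (↥Λ → M) :=
  W.map (LinearMap.funLeft (ZMod 2) M (Subtype.val : ↥Λ → G))

/-- The entropy of a `Γ`-invariant linear subspace, along a Følner exhaustion. -/
noncomputable def entropy {M : Type*} [AddCommGroup M] [Module (ZMod 2) M]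
    (F : ℕ → Finset G) (W : Submodule (ZMod 2) (G → M)) : ℝ :=
  Filter.limsup
    (fun n => (Module.finrank (ZMod 2) ↥(resSpace W (F n)) : ℝ) / (F n).card) atTop

/-- `S` is a finite symmetric generating set containing `1`. -/
def SymmGen (S : Finset G) : Prop :=
  (1 : G) ∈ S ∧ (∀ s ∈ S, s⁻¹ ∈ S) ∧ Subgroup.closure (S : Set G) = ⊤

/-- A Følner exhaustion with respect to the word metric of `S`:
`S ^ r * F n` is the `r`-neighbourhood of `F n`. -/
structure FolnerSeq (S : Finset G) (F : ℕ → Finset G) : Prop where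
  one_mem : (1 : G) ∈ F 0
  mono : Monotone F
  exhaust : ∀ g : G, ∃ n, g ∈ F n
  folner : ∀ r : ℕ,
    Tendsto (fun n => (((S ^ r * F n) \ F n).card : ℝ) / (F n).card) atTop (𝓝 0)

/-- The subspace of finitely supported functions in `(Γ → M)`. -/
def finSuppSub (M : Type*) [AddCommGroup M] [Module (ZMod 2) M] :
    Submodule (ZMod 2) (G → M) where
  carrier := {f | (Function.support f).Finite}
  add_mem' := fun hf hg => Set.Finite.subset (hf.union hg) (Function.support_add _ _)
  zero_mem' := by simp [Function.support_zero]
  smul_mem' := fun c f hf => Set.Finite.subset hf (by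
    intro x hx
    simp only [Function.mem_support] at hx ⊢
    intro h0
    exact hx (by simp [Pi.smul_apply, h0]))

lemma inv_mem_pow_of_symm {S : Finset G} (hSinv : ∀ s ∈ S, s⁻¹ ∈ S) :
    ∀ k, ∀ x ∈ S ^ k, x⁻¹ ∈ S ^ k := by
  intro k
  induction k with
  | zero => intro x hx; simp only [pow_zero, Finset.mem_one] at hx ⊢; simp [hx]
  | succ n ih =>
    intro x hx
    rw [pow_succ] at hx
    rw [pow_succ']
    obtain ⟨a, ha, s, hs, rfl⟩ := Finset.mem_mul.mp hx
    have : (a * s)⁻¹ = s⁻¹ * a⁻¹ := by group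
    rw [this]
    exact Finset.mul_mem_mul (hSinv s hs) (ih a ha)

lemma mem_pow_of_symmGen {S : Finset G} (hS : SymmGen S) (g : G) : ∃ k, g ∈ S ^ k := by
  have hg : g ∈ Subgroup.closure (S : Set G) := hS.2.2 ▸ Subgroup.mem_top g
  induction hg using Subgroup.closure_induction with
  | mem x hx => exact ⟨1, by simpa using hx⟩
  | one => exact ⟨0, by simp⟩
  | mul x y hx hy ihx ihy =>
    obtain ⟨k, hk⟩ := ihx; obtain ⟨l, hl⟩ := ihy
    exact ⟨k + l, by rw [pow_add]; exact Finset.mul_mem_mul hk hl⟩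
  | inv x hx ih =>
    obtain ⟨k, hk⟩ := ih
    exact ⟨k, inv_mem_pow_of_symm hS.2.1 k x hk⟩

lemma exists_net (B : Finset G) (hB : (1:G) ∈ B) (A : Finset G) :
    ∃ D : Finset G, D ⊆ A ∧
      (∀ x ∈ D, ∀ y ∈ D, ∀ b₁ ∈ B, ∀ b₂ ∈ B, x * b₁ = y * b₂ → x = y) ∧
      A ⊆ D * (B * B⁻¹) := by
  have h1BB : (1:G) ∈ B * B⁻¹ := by
    simpa using Finset.mul_mem_mul hB (Finset.inv_mem_inv hB)
  induction A using Finset.strongInduction with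
  | _ A ih =>
    rcases A.eq_empty_or_nonempty with rfl | ⟨a, ha⟩
    · exact ⟨∅, by simp, by simp, by simp⟩
    · have haa : a ∈ ({a} : Finset G) * (B * B⁻¹) := by
        simpa using Finset.mul_mem_mul (Finset.mem_singleton_self a) h1BB
      have hss : A \ ({a} * (B * B⁻¹)) ⊂ A :=
        (Finset.ssubset_iff_of_subset (Finset.sdiff_subset)).mpr
          ⟨a, ha, by simp [haa]⟩
      obtain ⟨D, hDsub, hsep, hcov⟩ := ih _ hss
      refine ⟨insert a D, Finset.insert_subset ha (hDsub.trans Finset.sdiff_subset), ?_, ?_⟩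
      · intro x hx y hy b₁ hb₁ b₂ hb₂ heq
        rcases Finset.mem_insert.mp hx with rfl | hxD <;>
          rcases Finset.mem_insert.mp hy with rfl | hyD
        · rfl
        · exfalso
          have : y = x * (b₁ * b₂⁻¹) := by rw [← mul_assoc, heq]; group
          have hy' : y ∈ ({x} : Finset G) * (B * B⁻¹) := by
            rw [this]
            exact Finset.mul_mem_mul (Finset.mem_singleton_self x)
              (Finset.mul_mem_mul hb₁ (Finset.inv_mem_inv hb₂))
          exact (Finset.mem_sdiff.mp (hDsub hyD)).2 hy'
        · exfalso
          have : x = y * (b₂ * b₁⁻¹) := by rw [← mul_assoc, ← heq]; group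
          have hx' : x ∈ ({y} : Finset G) * (B * B⁻¹) := by
            rw [this]
            exact Finset.mul_mem_mul (Finset.mem_singleton_self y)
              (Finset.mul_mem_mul hb₂ (Finset.inv_mem_inv hb₁))
          exact (Finset.mem_sdiff.mp (hDsub hxD)).2 hx'
        · exact hsep x hxD y hyD b₁ hb₁ b₂ hb₂ heq
      · intro z hz
        by_cases hza : z ∈ ({a} : Finset G) * (B * B⁻¹)
        · exact Finset.mul_subset_mul_right (Finset.singleton_subset_iff.mpr
            (Finset.mem_insert_self a D)) hza
        · have : z ∈ D * (B * B⁻¹) := hcov (Finset.mem_sdiff.mpr ⟨hz, hza⟩)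
          exact Finset.mul_subset_mul_right (Finset.subset_insert a D) this

/-- If the subspace `V⁰` of finitely supported elements of a linear
subshift `V ⊆ (Γ → 𝔽₂)^r` is nonzero, then `h_Γ(V⁰) > 0`. -/
theorem entropy_pos_of_finitely_supported (r : ℕ)
    (S : Finset G) (F : ℕ → Finset G) (hS : SymmGen S) (hF : FolnerSeq S F)
    (V : Submodule (ZMod 2) (G → Fin r → ZMod 2))
    (hVc : IsClosed (V : Set (G → Fin r → ZMod 2)))
    (hVi : InvariantSub (Fin r → ZMod 2) V)
    (hne : V ⊓ finSuppSub (Fin r → ZMod 2) ≠ ⊥) :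
    0 < entropy F (V ⊓ finSuppSub (Fin r → ZMod 2)) := by
  classical
  obtain ⟨f, hfW, hf0⟩ := (Submodule.ne_bot_iff _).mp hne
  set W := V ⊓ finSuppSub (Fin r → ZMod 2) with hWdef
  obtain ⟨g, hg⟩ : ∃ g, f g ≠ 0 := by
    by_contra h
    push_neg at h
    exact hf0 (funext h)
  have hWi : ∀ γ : G, ∀ h ∈ W, ltv (Fin r → ZMod 2) γ h ∈ W := by
    intro γ h hh
    refine ⟨hVi γ h hh.1, ?_⟩
    have hsub : Function.support (ltv (Fin r → ZMod 2) γ h) ⊆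
        (fun x => γ * x) '' Function.support h := by
      intro δ hδ
      exact ⟨γ⁻¹ * δ, hδ, by group⟩
    exact Set.Finite.subset (hh.2.image _) hsub
  set f' := ltv (Fin r → ZMod 2) g⁻¹ f with hf'def
  have hf'W : f' ∈ W := hWi g⁻¹ f hfW
  have hf'1 : f' 1 ≠ 0 := by simpa [hf'def, ltv] using hg
  -- support of f' inside a ball
  obtain ⟨k, hk⟩ : ∃ k, ∀ δ, f' δ ≠ 0 → δ ∈ S ^ k := by
    have hfin := hf'W.2
    have hch : ∀ δ : hfin.toFinset, ∃ m, (δ : G) ∈ S ^ m :=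
      fun δ => mem_pow_of_symmGen hS δ
    choose K hK using hch
    refine ⟨Finset.univ.sup K, fun δ hδ => ?_⟩
    have hδ' : δ ∈ hfin.toFinset := hfin.mem_toFinset.mpr hδ
    exact Finset.pow_subset_pow_right hS.1
      (Finset.le_sup (Finset.mem_univ (⟨δ, hδ'⟩ : hfin.toFinset))) (hK ⟨δ, hδ'⟩)
  set B := S ^ k with hBdef
  have hB1 : (1:G) ∈ B := Finset.one_mem_pow hS.1
  set c := (B * B⁻¹).card with hcdef
  have hcpos : 0 < c := Finset.card_pos.mpr ⟨1 * 1⁻¹, Finset.mul_mem_mul hB1 (Finset.inv_mem_inv hB1)⟩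
  -- lower bound on finrank for each n
  have key : ∀ n, (F n).card ≤ Module.finrank (ZMod 2) ↥(resSpace W (F n)) * c := by
    intro n
    obtain ⟨D, hDF, hsep, hcov⟩ := exists_net B hB1 (F n)
    set v : ↥D → (↥(F n) → Fin r → ZMod 2) :=
      fun x => LinearMap.funLeft (ZMod 2) (Fin r → ZMod 2) Subtype.val
        (ltv (Fin r → ZMod 2) (x : G) f') with hvdef
    have hvmem : ∀ x : ↥D, v x ∈ resSpace W (F n) :=
      fun x => ⟨ltv (Fin r → ZMod 2) (x : G) f', hWi _ f' hf'W, rfl⟩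
    have hLI : LinearIndependent (ZMod 2) v := by
      rw [linearIndependent_iff']
      intro s co hsum i hi
      have hx := congrFun hsum (⟨(i : G), hDF i.2⟩ : ↥(F n))
      rw [Finset.sum_apply] at hx
      have hterm : ∀ j ∈ s, j ≠ i →
          (co j • v j) (⟨(i : G), hDF i.2⟩ : ↥(F n)) = 0 := by
        intro j hjs hji
        have hz : f' ((j : G)⁻¹ * (i : G)) = 0 := by
          by_contra hnz
          have hmem : (j : G)⁻¹ * (i : G) ∈ B := hk _ hnz
          have : (j : G) = (i : G) :=
            hsep j j.2 i i.2 _ hmem 1 hB1 (by group)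
          exact hji (Subtype.ext this)
        simp [hvdef, LinearMap.funLeft, ltv, hz]
      have hx' : co i • f' 1 = 0 := by
        rw [Finset.sum_eq_single i hterm (fun h => absurd hi h)] at hx
        simpa [hvdef, LinearMap.funLeft, ltv] using hx
      rcases smul_eq_zero.mp hx' with h | h
      · exact h
      · exact absurd h hf'1
    have hLI' : LinearIndependent (ZMod 2)
        (fun x : ↥D => (⟨v x, hvmem x⟩ : ↥(resSpace W (F n)))) :=
      LinearIndependent.of_comp (resSpace W (F n)).subtype hLI
    have hcard : D.card ≤ Module.finrank (ZMod 2) ↥(resSpace W (F n)) := by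
      have := hLI'.fintype_card_le_finrank
      simpa using this
    calc (F n).card ≤ (D * (B * B⁻¹)).card := Finset.card_le_card hcov
      _ ≤ D.card * c := Finset.card_mul_le
      _ ≤ Module.finrank (ZMod 2) ↥(resSpace W (F n)) * c :=
          Nat.mul_le_mul_right c hcard
  -- card positivity and upper bound
  have hcardpos : ∀ n, 0 < (F n).card :=
    fun n => Finset.card_pos.mpr ⟨1, hF.mono (Nat.zero_le n) hF.one_mem⟩
  have hup : ∀ n, (Module.finrank (ZMod 2) ↥(resSpace W (F n)) : ℝ) / (F n).card ≤ r := by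
    intro n
    rw [div_le_iff₀ (by exact_mod_cast hcardpos n)]
    have h1 : Module.finrank (ZMod 2) ↥(resSpace W (F n)) ≤
        Module.finrank (ZMod 2) (↥(F n) → Fin r → ZMod 2) :=
      Submodule.finrank_le _
    have h2 : Module.finrank (ZMod 2) (↥(F n) → Fin r → ZMod 2) = (F n).card * r := by
      rw [Module.finrank_pi_fintype]
      simp [Module.finrank_pi]
    rw [h2] at h1
    calc (Module.finrank (ZMod 2) ↥(resSpace W (F n)) : ℝ)
        ≤ ((F n).card * r : ℕ) := by exact_mod_cast h1
      _ = (r : ℝ) * (F n).card := by push_cast; ring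
  have hlow : ∀ n, (1 : ℝ) / c ≤
      (Module.finrank (ZMod 2) ↥(resSpace W (F n)) : ℝ) / (F n).card := by
    intro n
    rw [div_le_div_iff₀ (by exact_mod_cast hcpos) (by exact_mod_cast hcardpos n)]
    rw [one_mul]
    exact_mod_cast key n
  have hle : (1 : ℝ) / c ≤ entropy F W := by
    apply Filter.le_limsup_of_frequently_le
    · exact Filter.Frequently.of_forall fun n => hlow n
    · exact Filter.isBoundedUnder_of ⟨(r : ℝ), fun n => hup n⟩
  have hpos : (0 : ℝ) < 1 / c := div_pos one_pos (by exact_mod_cast hcpos)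
  linarith
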